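/- (Strong law of large numbers for submartingale differences.) Let M be a submartingale in an imprecise probability tree such that ΔM is uniformly bounded (there is a real B with |ΔM(s)(x)| ≤ B for all situations s and all successor values x). Then the event {ω ∈ Ω : liminf_{n→∞} (M(ω^n) − M(□))/n < 0} is strictly null; i.e., liminf_{n→∞} (M(ω^n) − M(□))/n ≥ 0 strictly almost surely. -/

import Mathlib

open Filter Topology

namespace IP

/-- A situation of length `n`: a tuple of the first `n` states. -/
abbrev Sit (𝒳 : ℕ → Type) (n : ℕ) := (i : Fin n) → 𝒳 i

/-- A path: an infinite sequence of states. -/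
abbrev Path (𝒳 : ℕ → Type) := (i : ℕ) → 𝒳 i

/-- The initial segment `ω^n` of a path. -/
def res {𝒳 : ℕ → Type} (ω : Path 𝒳) (n : ℕ) : Sit 𝒳 n := fun i => ω i

/-- The initial (empty) situation `□`. -/
def emptySit {𝒳 : ℕ → Type} : Sit 𝒳 0 := fun i => i.elim0

/-- Append a next state to a situation. -/
def snoc {𝒳 : ℕ → Type} {n : ℕ} (s : Sit 𝒳 n) (x : 𝒳 n) : Sit 𝒳 (n + 1) := fun i =>
  if h : (i : ℕ) < n then s ⟨i, h⟩
  else cast (congrArg 𝒳 (Nat.le_antisymm (Nat.le_of_not_lt h) (Nat.lt_succ_iff.mp i.isLt))) x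

/-- Truncate a situation of length `n` to its first `k` states. -/
def trunc {𝒳 : ℕ → Type} {n : ℕ} (s : Sit 𝒳 n) (k : ℕ) (h : k ≤ n) : Sit 𝒳 k :=
  fun i => s ⟨i, lt_of_lt_of_le i.isLt h⟩

/-- A (coherent) lower expectation on a nonempty finite set. -/
def IsLE {Y : Type} [Fintype Y] [Nonempty Y] (E : (Y → ℝ) → ℝ) : Prop :=
  (∀ f : Y → ℝ, (⨅ y, f y) ≤ E f) ∧
  (∀ f g : Y → ℝ, E f + E g ≤ E (fun y => f y + g y)) ∧
  (∀ (f : Y → ℝ) (c : ℝ), 0 ≤ c → E (fun y => c * f y) = c * E f)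

/-- Submartingale w.r.t. the local models `Q` of an imprecise probability tree. -/
def IsSubmartingale {𝒳 : ℕ → Type} (Q : ∀ n, Sit 𝒳 n → (𝒳 n → ℝ) → ℝ)
    (F : ∀ n, Sit 𝒳 n → ℝ) : Prop :=
  ∀ (n : ℕ) (s : Sit 𝒳 n), 0 ≤ Q n s (fun x => F (n + 1) (snoc s x) - F n s)

/-- Supermartingale: `-F` is a submartingale. -/
def IsSupermartingale {𝒳 : ℕ → Type} (Q : ∀ n, Sit 𝒳 n → (𝒳 n → ℝ) → ℝ)
    (F : ∀ n, Sit 𝒳 n → ℝ) : Prop :=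
  IsSubmartingale Q (fun n s => -F n s)

/-- A test supermartingale: nonnegative, starting at 1. -/
def IsTestSupermartingale {𝒳 : ℕ → Type} (Q : ∀ n, Sit 𝒳 n → (𝒳 n → ℝ) → ℝ)
    (F : ∀ n, Sit 𝒳 n → ℝ) : Prop :=
  IsSupermartingale Q F ∧ (∀ n s, 0 ≤ F n s) ∧ F 0 emptySit = 1

/-- An event is strictly null if some test supermartingale converges to `+∞` on it. -/
def StrictlyNull {𝒳 : ℕ → Type} (Q : ∀ n, Sit 𝒳 n → (𝒳 n → ℝ) → ℝ)
    (A : Set (Path 𝒳)) : Prop :=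
  ∃ F : ∀ n, Sit 𝒳 n → ℝ, IsTestSupermartingale Q F ∧
    ∀ ω ∈ A, Tendsto (fun n => F n (res ω n)) atTop atTop

/-- `limsup_n F(ω^n)` as an extended real. -/
noncomputable def pathLimsup {𝒳 : ℕ → Type} (F : ∀ n, Sit 𝒳 n → ℝ) (ω : Path 𝒳) : EReal :=
  Filter.limsup (fun n => (F n (res ω n) : EReal)) atTop

/-- `liminf_n F(ω^n)` as an extended real. -/
noncomputable def pathLiminf {𝒳 : ℕ → Type} (F : ∀ n, Sit 𝒳 n → ℝ) (ω : Path 𝒳) : EReal :=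
  Filter.liminf (fun n => (F n (res ω n) : EReal)) atTop

/-- A real process bounded above. -/
def BddAbv {𝒳 : ℕ → Type} (F : ∀ n, Sit 𝒳 n → ℝ) : Prop := ∃ B : ℝ, ∀ n s, F n s ≤ B

/-- A real process bounded below. -/
def BddBlw {𝒳 : ℕ → Type} (F : ∀ n, Sit 𝒳 n → ℝ) : Prop := ∃ B : ℝ, ∀ n s, B ≤ F n s

/-- Conditional global lower expectation `E(f|s)` of an extended real variable. -/
noncomputable def lexp {𝒳 : ℕ → Type} (Q : ∀ n, Sit 𝒳 n → (𝒳 n → ℝ) → ℝ) {n : ℕ}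
    (s : Sit 𝒳 n) (f : Path 𝒳 → EReal) : EReal :=
  sSup ((fun F : ∀ k, Sit 𝒳 k → ℝ => (F n s : EReal)) ''
    {F : ∀ k, Sit 𝒳 k → ℝ | IsSubmartingale Q F ∧ BddAbv F ∧
      ∀ ω : Path 𝒳, res ω n = s → pathLimsup F ω ≤ f ω})

/-- Conditional global upper expectation `Ē(f|s)`. -/
noncomputable def uexp {𝒳 : ℕ → Type} (Q : ∀ n, Sit 𝒳 n → (𝒳 n → ℝ) → ℝ) {n : ℕ}
    (s : Sit 𝒳 n) (f : Path 𝒳 → EReal) : EReal :=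
  - lexp Q s (fun ω => - f ω)

/-- The local models of a (time-homogeneous) imprecise Markov chain with initial model `E1`
and transition models `QT`. -/
def markovQ {X : Type} (E1 : (X → ℝ) → ℝ) (QT : X → (X → ℝ) → ℝ) :
    ∀ n, Sit (fun _ => X) n → (X → ℝ) → ℝ
  | 0, _ => E1
  | n + 1, s => QT (s ⟨n, Nat.lt_succ_self n⟩)

/-- Prefix a path with a situation (fixed state space). -/
def prependX {X : Type} {n : ℕ} (s : Sit (fun _ => X) n) (ω : ℕ → X) : ℕ → X :=
  fun i => if h : i < n then s ⟨i, h⟩ else ω (i - n)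

/-- Extension of a lower transition operator to extended real maps. -/
noncomputable def Text {X : Type} (T : (X → ℝ) → X → ℝ) (g : X → EReal) : X → EReal :=
  fun x => sSup ((fun h : X → ℝ => (T h x : EReal)) '' {h : X → ℝ | ∀ y, (h y : EReal) ≤ g y})

/-- The variation (semi)norm `max h - min h`. -/
noncomputable def varnorm {X : Type} [Fintype X] [Nonempty X] (h : X → ℝ) : ℝ :=
  (⨆ x, h x) - ⨅ x, h x

/-- The (weak) coefficient of ergodicity of a lower transition operator. -/
noncomputable def coeff {X : Type} [Fintype X] [Nonempty X] (S : (X → ℝ) → X → ℝ) : ℝ :=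
  sSup {v : ℝ | ∃ h : X → ℝ, (∀ x, 0 ≤ h x ∧ h x ≤ 1) ∧ v = varnorm (S h)}

/-- Extend a situation to a path, arbitrarily. -/
noncomputable def extend {𝒳 : ℕ → Type} [∀ k, Nonempty (𝒳 k)] {n : ℕ} (t : Sit 𝒳 n) :
    Path 𝒳 :=
  fun i => if h : i < n then t ⟨i, h⟩ else Classical.arbitrary (𝒳 i)



/-! ### Auxiliary structural lemmas -/

section Aux

variable {𝒳 : ℕ → Type}

lemma snoc_res (ω : Path 𝒳) (n : ℕ) : snoc (res ω n) (ω n) = res ω (n+1) := by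
  funext i
  simp only [snoc, res]
  split
  · rfl
  · next h =>
    have key : ∀ m (e : n = m), cast (congrArg 𝒳 e) (ω n) = ω m := by
      rintro m rfl; rfl
    exact key _ (Nat.le_antisymm (Nat.le_of_not_lt h) (Nat.lt_succ_iff.mp i.isLt))

lemma trunc_snoc_le {n : ℕ} (s : Sit 𝒳 n) (x : 𝒳 n) (k : ℕ) (h' : k ≤ n+1) (h : k ≤ n) :
    trunc (snoc s x) k h' = trunc s k h := by
  funext i
  simp only [trunc, snoc]
  rw [dif_pos (lt_of_lt_of_le i.isLt h)]

lemma trunc_snoc_self' {n : ℕ} (s : Sit 𝒳 n) (x : 𝒳 n) (h' : n+1 ≤ n+1) :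
    trunc (snoc s x) (n+1) h' = snoc s x := by
  funext i; simp [trunc]

lemma trunc_snoc_n' {n : ℕ} (s : Sit 𝒳 n) (x : 𝒳 n) (h' : n ≤ n+1) :
    trunc (snoc s x) n h' = s := by
  funext i
  simp only [trunc, snoc]
  rw [dif_pos i.isLt]

lemma trunc_self {n : ℕ} (s : Sit 𝒳 n) : trunc s n le_rfl = s := rfl

lemma trunc_zero {n : ℕ} (s : Sit 𝒳 n) : trunc s 0 n.zero_le = emptySit := by
  funext i; exact i.elim0

lemma snoc_trunc {n : ℕ} (s : Sit 𝒳 n) (k : ℕ) (h : k < n) :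
    snoc (trunc s k h.le) (s ⟨k, h⟩) = trunc s (k+1) h := by
  funext i
  simp only [snoc, trunc]
  split
  · rfl
  · next hh =>
    have key : ∀ (m : ℕ) (hm : m < n) (e : k = m),
        cast (congrArg 𝒳 e) (s ⟨k, h⟩) = s ⟨m, hm⟩ := by
      rintro m hm rfl; rfl
    exact key _ _ (Nat.le_antisymm (Nat.le_of_not_lt hh) (Nat.lt_succ_iff.mp i.isLt))

end Aux

/-! ### Lower expectation facts -/

section LEFacts

variable {Y : Type} [Fintype Y] [Nonempty Y] {E : (Y → ℝ) → ℝ}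

lemma IsLE.zero (hE : IsLE E) : E (fun _ => 0) = 0 := by
  have := hE.2.2 (fun _ => 0) 0 le_rfl
  simpa using this

lemma IsLE.ge_add_inf (hE : IsLE E) (f g : Y → ℝ) :
    E g + ⨅ y, (f y - g y) ≤ E f := by
  have h1 := hE.2.1 g (fun y => f y - g y)
  have h2 := hE.1 (fun y => f y - g y)
  have h3 : (fun y => g y + (f y - g y)) = f := by funext y; ring
  rw [h3] at h1
  linarith

lemma IsLE.sum_le {ι : Type*} (hE : IsLE E) (A : Finset ι) (f : ι → Y → ℝ) :
    ∑ i ∈ A, E (f i) ≤ E (fun y => ∑ i ∈ A, f i y) := by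
  classical
  induction A using Finset.cons_induction with
  | empty => simp [hE.zero]
  | cons a A ha ih =>
    rw [Finset.sum_cons]
    calc E (f a) + ∑ i ∈ A, E (f i) ≤ E (f a) + E (fun y => ∑ i ∈ A, f i y) := by linarith
    _ ≤ E (fun y => f a y + ∑ i ∈ A, f i y) := hE.2.1 _ _
    _ = E (fun y => ∑ i ∈ Finset.cons a A ha, f i y) := by
        congr 1; funext y; rw [Finset.sum_cons]

lemma IsLE.nonneg_of_approx (hE : IsLE E) (g : Y → ℝ)
    (h : ∀ ε : ℝ, 0 < ε → ∃ g' : Y → ℝ, 0 ≤ E g' ∧ ∀ y, |g y - g' y| ≤ ε) :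
    0 ≤ E g := by
  by_contra hc
  push_neg at hc
  obtain ⟨g', hg', hclose⟩ := h (-(E g)/2) (by linarith)
  have h2 : E g' + ⨅ y, (g y - g' y) ≤ E g := hE.ge_add_inf g g'
  have h3 : (-(-(E g)/2) : ℝ) ≤ ⨅ y, (g y - g' y) := by
    apply le_ciInf
    intro y
    have := abs_le.mp (hclose y)
    linarith [this.1]
  linarith

end LEFacts

/-! ### Countable mixtures of test supermartingales -/

section Mixture

variable {𝒳 : ℕ → Type} [∀ n, Fintype (𝒳 n)] [∀ n, Nonempty (𝒳 n)]

lemma mixture {ι : Type} (Q : ∀ n, Sit 𝒳 n → (𝒳 n → ℝ) → ℝ) (hQ : ∀ n s, IsLE (Q n s))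
    (w : ι → ℝ) (hw : ∀ i, 0 ≤ w i) (hws : Summable w) (hw1 : ∑' i, w i = 1)
    (T : ι → ∀ n, Sit 𝒳 n → ℝ) (hsuper : ∀ i, IsSupermartingale Q (T i))
    (hpos : ∀ i n s, 0 ≤ T i n s) (hone : ∀ i, T i 0 emptySit = 1)
    (C : ℕ → ℝ) (hC : ∀ i n s, T i n s ≤ C n) :
    IsTestSupermartingale Q (fun n s => ∑' i, w i * T i n s) := by
  have hsum : ∀ n (s : Sit 𝒳 n), Summable (fun i => w i * T i n s) := by
    intro n s
    apply Summable.of_nonneg_of_le (fun i => mul_nonneg (hw i) (hpos i n s))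
      (fun i => mul_le_mul_of_nonneg_left (hC i n s) (hw i)) (hws.mul_right (C n))
  refine ⟨?_, ?_, ?_⟩
  · intro n s
    set g : 𝒳 n → ℝ := fun x =>
      (fun n s => -(∑' i, w i * T i n s)) (n+1) (snoc s x)
        - (fun n s => -(∑' i, w i * T i n s)) n s with hg
    show 0 ≤ Q n s g
    have hgi : ∀ x, HasSum (fun i => w i * (T i n s - T i (n+1) (snoc s x))) (g x) := by
      intro x
      have h1 := (hsum n s).hasSum.sub (hsum (n+1) (snoc s x)).hasSum
      have h2 : (fun i => w i * T i n s - w i * T i (n+1) (snoc s x))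
          = fun i => w i * (T i n s - T i (n+1) (snoc s x)) := by
        funext i; ring
      rw [h2] at h1
      have h3 : g x = (∑' i, w i * T i n s) - ∑' i, w i * T i (n+1) (snoc s x) := by
        rw [hg]; ring
      rw [h3]; exact h1
    apply (hQ n s).nonneg_of_approx
    intro ε hε
    have hev : ∀ᶠ A : Finset ι in atTop, ∀ x,
        |g x - ∑ i ∈ A, w i * (T i n s - T i (n+1) (snoc s x))| ≤ ε := by
      rw [eventually_all]
      intro x
      have h4 : Tendsto (fun A : Finset ι => ∑ i ∈ A, w i * (T i n s - T i (n+1) (snoc s x)))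
          atTop (nhds (g x)) := (hgi x)
      have h5 := (Metric.tendsto_nhds.mp h4) ε hε
      filter_upwards [h5] with A hA
      rw [Real.dist_eq] at hA
      rw [abs_sub_comm]
      exact hA.le
    obtain ⟨A, hA⟩ := hev.exists
    refine ⟨_, ?_, hA⟩
    calc (0:ℝ) = ∑ i ∈ A, (0:ℝ) := by simp
    _ ≤ ∑ i ∈ A, Q n s (fun x => w i * (T i n s - T i (n+1) (snoc s x))) := by
        apply Finset.sum_le_sum
        intro i _
        have h6 : (fun x => w i * (T i n s - T i (n+1) (snoc s x)))
            = fun x => w i * ((fun x => (fun n s => -(T i n s)) (n+1) (snoc s x)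
                - (fun n s => -(T i n s)) n s) x) := by
          funext x; ring
        rw [h6, (hQ n s).2.2 _ _ (hw i)]
        exact mul_nonneg (hw i) (hsuper i n s)
    _ ≤ Q n s (fun x => ∑ i ∈ A, w i * (T i n s - T i (n+1) (snoc s x))) :=
        (hQ n s).sum_le A _
  · intro n s
    exact tsum_nonneg (fun i => mul_nonneg (hw i) (hpos i n s))
  · simp only [hone, mul_one, hw1]

end Mixture

/-! ### The multiplicative supermartingale `∏ (1 - λ ΔM)` -/

lemma key_ineq {x : ℝ} (hx : |x| ≤ 1/2) : Real.exp (-(x + 2*x^2)) ≤ 1 - x := by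
  obtain ⟨hx1, hx2⟩ := abs_le.mp hx
  have h1 : (0:ℝ) < 1 + x + 2*x^2 := by nlinarith
  have h2 : (1:ℝ) ≤ (1-x)*(1+x+2*x^2) := by nlinarith
  have h3 : 1 + x + 2*x^2 ≤ Real.exp (x+2*x^2) := by
    have := Real.add_one_le_exp (x+2*x^2); linarith
  have h4 : Real.exp (-(x+2*x^2)) * Real.exp (x+2*x^2) = 1 := by
    rw [← Real.exp_add]
    have h5 : -(x+2*x^2) + (x+2*x^2) = 0 := by ring
    rw [h5, Real.exp_zero]
  nlinarith [Real.exp_pos (-(x+2*x^2)), Real.exp_pos (x+2*x^2)]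

/-- The multiplicative process `∏ (1 - lam * ΔM)`. -/
noncomputable def prodProc {𝒳 : ℕ → Type} (M : ∀ n, Sit 𝒳 n → ℝ) (lam : ℝ) :
    ∀ n, Sit 𝒳 n → ℝ :=
  fun n s => ∏ k : Fin n,
    (1 - lam * (M (k+1) (trunc s (k+1) k.isLt) - M k (trunc s k k.isLt.le)))

section ProdProps

variable {𝒳 : ℕ → Type} (M : ∀ n, Sit 𝒳 n → ℝ) (lam B' : ℝ)

lemma prodProc_zero (s : Sit 𝒳 0) : prodProc M lam 0 s = 1 := by simp [prodProc]

lemma prodProc_succ {n : ℕ} (s : Sit 𝒳 n) (x : 𝒳 n) :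
    prodProc M lam (n+1) (snoc s x)
      = prodProc M lam n s * (1 - lam * (M (n+1) (snoc s x) - M n s)) := by
  unfold prodProc
  rw [Fin.prod_univ_castSucc]
  congr 1
  · apply Finset.prod_congr rfl
    intro k _
    simp only [Fin.coe_castSucc]
    rw [trunc_snoc_le s x (↑k+1) _ k.isLt, trunc_snoc_le s x ↑k _ k.isLt.le]
  · simp only [Fin.val_last]
    rw [trunc_snoc_self' s x, trunc_snoc_n' s x]

lemma teleSum {n : ℕ} (s : Sit 𝒳 n) :
    ∑ k : Fin n, (M (k+1) (trunc s (k+1) k.isLt) - M k (trunc s k k.isLt.le))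
      = M n s - M 0 emptySit := by
  have key := Finset.sum_range_sub (fun k => if h : k ≤ n then M k (trunc s k h) else 0) n
  rw [dif_pos (le_refl n), dif_pos n.zero_le, trunc_self, trunc_zero] at key
  have h1 : ∀ k : Fin n, M (↑k+1) (trunc s (↑k+1) k.isLt) - M ↑k (trunc s ↑k k.isLt.le)
      = (if h : (↑k+1) ≤ n then M (↑k+1) (trunc s (↑k+1) h) else 0)
        - (if h : (↑k:ℕ) ≤ n then M ↑k (trunc s ↑k h) else 0) := by
    intro k
    have hk1 : ↑k + 1 ≤ n := k.isLt
    have hk2 : (↑k:ℕ) ≤ n := k.isLt.le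
    rw [dif_pos hk1, dif_pos hk2]
  rw [Finset.sum_congr rfl (fun k _ => h1 k),
    Fin.sum_univ_eq_sum_range
      (fun k => (if h : k+1 ≤ n then M (k+1) (trunc s (k+1) h) else 0)
        - (if h : k ≤ n then M k (trunc s k h) else 0)) n]
  exact key

variable (hlam : 0 ≤ lam) (hB : ∀ n (s : Sit 𝒳 n) x, |M (n+1) (snoc s x) - M n s| ≤ B')
  (hhalf : lam * B' ≤ 1/2)

include hlam hB in
lemma fac_abs {n : ℕ} (s : Sit 𝒳 n) (k : Fin n) :
    |lam * (M (↑k+1) (trunc s (↑k+1) k.isLt) - M ↑k (trunc s ↑k k.isLt.le))| ≤ lam * B' := by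
  rw [abs_mul, abs_of_nonneg hlam]
  apply mul_le_mul_of_nonneg_left _ hlam
  rw [← snoc_trunc s ↑k k.isLt]
  exact hB _ _ _

include hlam hB hhalf in
lemma fac_bounds {n : ℕ} (s : Sit 𝒳 n) (k : Fin n) :
    |lam * (M (↑k+1) (trunc s (↑k+1) k.isLt) - M ↑k (trunc s ↑k k.isLt.le))| ≤ 1/2 :=
  (fac_abs M lam B' hlam hB s k).trans hhalf

include hlam hB hhalf in
lemma prodProc_nonneg {n : ℕ} (s : Sit 𝒳 n) : 0 ≤ prodProc M lam n s := by
  apply Finset.prod_nonneg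
  intro k _
  have := abs_le.mp (fac_bounds M lam B' hlam hB hhalf s k)
  linarith [this.2]

include hlam hB hhalf in
lemma prodProc_le {n : ℕ} (s : Sit 𝒳 n) : prodProc M lam n s ≤ (3/2)^n := by
  unfold prodProc
  calc ∏ k : Fin n, (1 - lam * (M (↑k+1) (trunc s (↑k+1) k.isLt) - M ↑k (trunc s ↑k k.isLt.le)))
      ≤ ∏ _k : Fin n, (3/2 : ℝ) := by
        apply Finset.prod_le_prod
        · intro k _
          have := abs_le.mp (fac_bounds M lam B' hlam hB hhalf s k)
          linarith [this.2]
        · intro k _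
          have := abs_le.mp (fac_bounds M lam B' hlam hB hhalf s k)
          linarith [this.1]
    _ = (3/2)^n := by rw [Finset.prod_const, Finset.card_univ, Fintype.card_fin]

include hlam hB hhalf in
lemma prodProc_ge {n : ℕ} (s : Sit 𝒳 n) :
    Real.exp (-(lam * (M n s - M 0 emptySit)) - 2*(n:ℝ)*(lam*B')^2) ≤ prodProc M lam n s := by
  set t : Fin n → ℝ :=
    fun k => lam * (M (↑k+1) (trunc s (↑k+1) k.isLt) - M ↑k (trunc s ↑k k.isLt.le)) with ht
  have habs : ∀ k, |t k| ≤ lam * B' := fun k => fac_abs M lam B' hlam hB s k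
  have hhalf' : ∀ k, |t k| ≤ 1/2 := fun k => (habs k).trans hhalf
  have step1 : Real.exp (-(lam * (M n s - M 0 emptySit)) - 2*(n:ℝ)*(lam*B')^2)
      ≤ Real.exp (∑ k : Fin n, -(t k + 2 * (t k)^2)) := by
    apply Real.exp_le_exp.mpr
    have hsum : ∑ k : Fin n, t k = lam * (M n s - M 0 emptySit) := by
      rw [ht, ← Finset.mul_sum, teleSum]
    have hsq : ∑ k : Fin n, (t k)^2 ≤ (n:ℝ) * (lam*B')^2 := by
      calc ∑ k : Fin n, (t k)^2 ≤ ∑ _k : Fin n, (lam*B')^2 := by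
            apply Finset.sum_le_sum
            intro k _
            rw [← sq_abs]
            exact pow_le_pow_left₀ (abs_nonneg _) (habs k) 2
        _ = (n:ℝ) * (lam*B')^2 := by simp [mul_comm]
    have eneg : ∑ k : Fin n, -(t k + 2 * (t k)^2) = -∑ k : Fin n, (t k + 2 * (t k)^2) :=
      Finset.sum_neg_distrib _
    have eadd : ∑ k : Fin n, (t k + 2 * (t k)^2)
        = (∑ k : Fin n, t k) + ∑ k : Fin n, 2 * (t k)^2 := Finset.sum_add_distrib
    have emul : ∑ k : Fin n, 2 * (t k)^2 = 2 * ∑ k : Fin n, (t k)^2 :=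
      (Finset.mul_sum _ _ _).symm
    rw [eneg, eadd, emul, hsum]
    linarith
  refine step1.trans ?_
  rw [Real.exp_sum]
  unfold prodProc
  apply Finset.prod_le_prod
  · intro k _; exact (Real.exp_pos _).le
  · intro k _
    exact key_ineq (hhalf' k)

end ProdProps

section SuperStop

variable {𝒳 : ℕ → Type} [∀ n, Fintype (𝒳 n)] [∀ n, Nonempty (𝒳 n)]
  (Q : ∀ n, Sit 𝒳 n → (𝒳 n → ℝ) → ℝ) (hQ : ∀ n s, IsLE (Q n s))

include hQ in
lemma prodProc_super (M : ∀ n, Sit 𝒳 n → ℝ) (lam B' : ℝ) (hlam : 0 ≤ lam)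
    (hB : ∀ n (s : Sit 𝒳 n) x, |M (n+1) (snoc s x) - M n s| ≤ B') (hhalf : lam * B' ≤ 1/2)
    (hM : IsSubmartingale Q M) : IsSupermartingale Q (prodProc M lam) := by
  intro n s
  have h1 : (fun x => -prodProc M lam (n+1) (snoc s x) - -prodProc M lam n s)
      = fun x => (prodProc M lam n s * lam) * (M (n+1) (snoc s x) - M n s) := by
    funext x
    rw [prodProc_succ]
    ring
  show 0 ≤ Q n s (fun x => -prodProc M lam (n+1) (snoc s x) - -prodProc M lam n s)
  rw [h1, (hQ n s).2.2 _ _ (mul_nonneg (prodProc_nonneg M lam B' hlam hB hhalf s) hlam)]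
  exact mul_nonneg (mul_nonneg (prodProc_nonneg M lam B' hlam hB hhalf s) hlam) (hM n s)

/-- The process `F` stopped at the first time it reaches level `L`. -/
noncomputable def stopProc (F : ∀ n, Sit 𝒳 n → ℝ) (L : ℝ) : ∀ n, Sit 𝒳 n → ℝ
  | 0, s => F 0 s
  | (n+1), s =>
      if L ≤ stopProc F L n (trunc s n n.le_succ) then stopProc F L n (trunc s n n.le_succ)
      else F (n+1) s

lemma stopProc_snoc (F : ∀ n, Sit 𝒳 n → ℝ) (L : ℝ) {n : ℕ} (s : Sit 𝒳 n) (x : 𝒳 n) :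
    stopProc F L (n+1) (snoc s x)
      = if L ≤ stopProc F L n s then stopProc F L n s else F (n+1) (snoc s x) := by
  rw [stopProc, trunc_snoc_n' s x]

lemma stopProc_nonneg (F : ∀ n, Sit 𝒳 n → ℝ) (L : ℝ) (hF : ∀ n s, 0 ≤ F n s)
    (n : ℕ) (s : Sit 𝒳 n) : 0 ≤ stopProc F L n s := by
  induction n with
  | zero => exact hF 0 s
  | succ m ih =>
    rw [stopProc]
    split
    · exact ih _
    · exact hF _ _

lemma stopProc_le (F : ∀ n, Sit 𝒳 n → ℝ) (L : ℝ) (C : ℝ) (hC : 1 ≤ C)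
    (hF : ∀ n s, F n s ≤ C^n) (n : ℕ) (s : Sit 𝒳 n) : stopProc F L n s ≤ C^n := by
  induction n with
  | zero => exact hF 0 s
  | succ m ih =>
    rw [stopProc]
    split
    · calc stopProc F L m (trunc s m m.le_succ) ≤ C^m := ih _
      _ ≤ C^(m+1) := pow_le_pow_right₀ hC m.le_succ
    · exact hF _ _

/-- Either the stopped process has reached `L`, or it coincides with `F`. -/
lemma stopProc_reached (F : ∀ n, Sit 𝒳 n → ℝ) (L : ℝ) (n : ℕ) (s : Sit 𝒳 n) :
    L ≤ stopProc F L n s ∨ stopProc F L n s = F n s := by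
  induction n with
  | zero => exact Or.inr rfl
  | succ m _ =>
    rw [stopProc]
    split
    · next h => exact Or.inl h
    · exact Or.inr rfl

include hQ in
lemma stopProc_super (F : ∀ n, Sit 𝒳 n → ℝ) (L : ℝ) (hF : IsSupermartingale Q F) :
    IsSupermartingale Q (stopProc F L) := by
  intro n s
  show 0 ≤ Q n s (fun x => -stopProc F L (n+1) (snoc s x) - -stopProc F L n s)
  by_cases h : L ≤ stopProc F L n s
  · have h1 : (fun x => -stopProc F L (n+1) (snoc s x) - -stopProc F L n s)
        = fun x => (0:ℝ) * 0 := by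
      funext x
      rw [stopProc_snoc, if_pos h]
      ring
    rw [h1, (hQ n s).2.2 _ _ le_rfl]
    simp
  · have h1 : (fun x => -stopProc F L (n+1) (snoc s x) - -stopProc F L n s)
        = fun x => -F (n+1) (snoc s x) - -F n s := by
      funext x
      rw [stopProc_snoc, if_neg h]
      have hs : stopProc F L n s = F n s := (stopProc_reached F L n s).resolve_left h
      rw [hs]
    rw [h1]
    exact hF n s

lemma stopProc_persist (F : ∀ n, Sit 𝒳 n → ℝ) (L : ℝ) (ω : Path 𝒳) (m : ℕ)
    (hm : L ≤ stopProc F L m (res ω m)) :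
    ∀ n, m ≤ n → L ≤ stopProc F L n (res ω n) := by
  intro n hn
  obtain ⟨d, rfl⟩ := Nat.exists_eq_add_of_le hn
  clear hn
  induction d with
  | zero => exact hm
  | succ k ih =>
    have : m + (k+1) = (m+k) + 1 := by ring
    rw [this, ← snoc_res ω (m+k), stopProc_snoc, if_pos ih]
    exact ih

end SuperStop


section Weights

lemma summable_half_pow : Summable (fun i : ℕ => (2:ℝ)⁻¹^(i+1)) := by
  apply Summable.mul_right
  exact summable_geometric_of_lt_one (by norm_num) (by norm_num)

lemma tsum_half_pow : ∑' i : ℕ, (2:ℝ)⁻¹^(i+1) = 1 := by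
  have heq : (fun i : ℕ => (2:ℝ)⁻¹^(i+1)) = fun i : ℕ => (1:ℝ)/2/2^i := by
    funext i
    rw [inv_pow, pow_succ', div_div, one_div]
  rw [heq]
  exact tsum_geometric_two' 1

lemma summable_norm_half_pow : Summable (fun i : ℕ => ‖(2:ℝ)⁻¹^(i+1)‖) := by
  have heq : (fun i : ℕ => ‖(2:ℝ)⁻¹^(i+1)‖) = fun i : ℕ => (2:ℝ)⁻¹^(i+1) := by
    funext i
    rw [Real.norm_eq_abs, abs_of_nonneg (by positivity)]
  rw [heq]
  exact summable_half_pow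

set_option maxHeartbeats 1000000 in
lemma summable_w : Summable (fun p : ℕ × ℕ => (2:ℝ)⁻¹^(p.1+1) * (2:ℝ)⁻¹^(p.2+1)) :=
  summable_mul_of_summable_norm summable_norm_half_pow summable_norm_half_pow

set_option maxHeartbeats 1000000 in
lemma tsum_w : ∑' p : ℕ × ℕ, ((2:ℝ)⁻¹^(p.1+1) * (2:ℝ)⁻¹^(p.2+1)) = 1 := by
  have h := tsum_mul_tsum_of_summable_norm (R := ℝ)
    summable_norm_half_pow summable_norm_half_pow
  rw [← h, tsum_half_pow, mul_one]

end Weights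

set_option maxHeartbeats 4000000 in
/-- Strong law of large numbers for submartingale differences. -/
theorem slln {𝒳 : ℕ → Type} [∀ n, Fintype (𝒳 n)] [∀ n, Nonempty (𝒳 n)]
    (Q : ∀ n, Sit 𝒳 n → (𝒳 n → ℝ) → ℝ) (hQ : ∀ n s, IsLE (Q n s))
    (M : ∀ n, Sit 𝒳 n → ℝ) (hM : IsSubmartingale Q M)
    (B : ℝ) (hB : ∀ (n : ℕ) (s : Sit 𝒳 n) (x : 𝒳 n), |M (n + 1) (snoc s x) - M n s| ≤ B) :
    StrictlyNull Q {ω : Path 𝒳 | Filter.liminf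
      (fun n : ℕ => (((M n (res ω n) - M 0 emptySit) / (n : ℝ) : ℝ) : EReal)) atTop < 0} := by
  classical
  set B' : ℝ := max B 1 with hB'def
  have hB'1 : (1:ℝ) ≤ B' := le_max_right _ _
  have hB'0 : (0:ℝ) ≤ B' := zero_le_one.trans hB'1
  have hB' : ∀ n (s : Sit 𝒳 n) x, |M (n+1) (snoc s x) - M n s| ≤ B' :=
    fun n s x => (hB n s x).trans (le_max_left _ _)
  set ε : ℕ → ℝ := fun i => ((i:ℝ)+1)⁻¹ with hεdef
  have hεpos : ∀ i, 0 < ε i := fun i => by positivity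
  have hεle1 : ∀ i, ε i ≤ 1 := by
    intro i
    rw [hεdef]
    have h1 : (1:ℝ) ≤ (i:ℝ)+1 := by
      have := Nat.cast_nonneg (α := ℝ) i; linarith
    calc ((i:ℝ)+1)⁻¹ ≤ 1⁻¹ := by
          apply inv_anti₀ one_pos h1
      _ = 1 := inv_one
  set lam : ℕ → ℝ := fun i => ε i / (4*B'^2) with hlamdef
  have hlampos : ∀ i, 0 < lam i := by
    intro i
    apply div_pos (hεpos i)
    positivity
  have hlamB : ∀ i, lam i * B' ≤ 1/2 := by
    intro i
    rw [hlamdef]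
    simp only
    rw [div_mul_eq_mul_div, div_le_iff₀ (by positivity)]
    nlinarith [hεle1 i, (hεpos i).le, hB'1]
  have hrate : ∀ i, 2 * (lam i * B')^2 = lam i * ε i / 2 := by
    intro i
    rw [hlamdef]
    have hBne : B' ≠ 0 := by positivity
    field_simp
    ring
  -- the component processes
  set P : ℕ → ∀ n, Sit 𝒳 n → ℝ := fun i => prodProc M (lam i) with hPdef
  set T : ℕ × ℕ → ∀ n, Sit 𝒳 n → ℝ := fun p => stopProc (P p.1) ((4:ℝ)^p.2) with hTdef
  set w : ℕ × ℕ → ℝ := fun p => (2:ℝ)⁻¹^(p.1+1) * (2:ℝ)⁻¹^(p.2+1) with hwdef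
  have hwpos : ∀ p, 0 ≤ w p := by
    intro p
    rw [hwdef]
    positivity
  have hws : Summable w := by
    rw [hwdef]
    exact summable_w
  have hw1 : ∑' p, w p = 1 := by
    rw [hwdef]
    exact tsum_w
  have hPsuper : ∀ i, IsSupermartingale Q (P i) := by
    intro i
    exact prodProc_super Q hQ M (lam i) B' (hlampos i).le hB' (hlamB i) hM
  have hPnonneg : ∀ i n s, 0 ≤ P i n s :=
    fun i n s => prodProc_nonneg M (lam i) B' (hlampos i).le hB' (hlamB i) s
  have hPle : ∀ i n s, P i n s ≤ (3/2)^n :=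
    fun i n s => prodProc_le M (lam i) B' (hlampos i).le hB' (hlamB i) s
  have hTsuper : ∀ p, IsSupermartingale Q (T p) :=
    fun p => stopProc_super Q hQ (P p.1) _ (hPsuper p.1)
  have hTpos : ∀ p n s, 0 ≤ T p n s :=
    fun p n s => stopProc_nonneg (P p.1) _ (hPnonneg p.1) n s
  have hTone : ∀ p, T p 0 emptySit = 1 := by
    intro p
    rw [hTdef]
    exact prodProc_zero M (lam p.1) emptySit
  have hTle : ∀ p n s, T p n s ≤ (3/2:ℝ)^n :=
    fun p n s => stopProc_le (P p.1) _ (3/2) (by norm_num) (hPle p.1) n s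
  have hTest : IsTestSupermartingale Q (fun n s => ∑' p, w p * T p n s) :=
    mixture Q hQ w hwpos hws hw1 T hTsuper hTpos hTone _ hTle
  refine ⟨fun n s => ∑' p, w p * T p n s, hTest, ?_⟩
  -- convergence to +∞ on the event
  intro ω hω
  have hlim : Filter.liminf
      (fun n : ℕ => (((M n (res ω n) - M 0 emptySit) / (n : ℝ) : ℝ) : EReal)) atTop < 0 := hω
  obtain ⟨r, hr1, hr2⟩ := EReal.lt_iff_exists_real_btwn.mp hlim
  have hrneg : r < 0 := by
    have := hr2
    exact_mod_cast (by exact_mod_cast hr2 : (r:EReal) < ((0:ℝ):EReal))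
  obtain ⟨i, hi⟩ : ∃ i : ℕ, ε i ≤ -r := by
    obtain ⟨i, hi⟩ := exists_nat_gt ((-r)⁻¹)
    refine ⟨i, ?_⟩
    have h0 : (0:ℝ) < -r := by linarith
    have h2 : (-r)⁻¹ < (i:ℝ)+1 := hi.trans (lt_add_one _)
    have h3 : ((i:ℝ)+1)⁻¹ < ((-r)⁻¹)⁻¹ := by
      apply inv_strictAnti₀ (by positivity) h2
    rw [inv_inv] at h3
    exact le_of_lt h3
  have hfreq : ∃ᶠ n in atTop,
      ((M n (res ω n) - M 0 emptySit) / (n:ℝ) : ℝ) < r := by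
    have hf := frequently_lt_of_liminf_lt (by isBoundedDefault) hr1
    apply hf.mono
    intro n hn
    exact_mod_cast hn
  have hfreq2 : ∃ᶠ n in atTop, M n (res ω n) - M 0 emptySit ≤ -(ε i) * n := by
    apply (hfreq.and_eventually (eventually_ge_atTop 1)).mono
    rintro n ⟨hn1, hn2⟩
    have hn0 : (0:ℝ) < n := by exact_mod_cast hn2
    have h4 : M n (res ω n) - M 0 emptySit < r * n := (div_lt_iff₀ hn0).mp hn1
    have h5 : r * n ≤ -(ε i) * n := by
      apply mul_le_mul_of_nonneg_right _ hn0.le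
      linarith
    linarith
  have hgrow : ∃ᶠ n : ℕ in atTop,
      Real.exp (lam i * ε i / 2 * (n:ℝ)) ≤ P i n (res ω n) := by
    apply hfreq2.mono
    intro n hn
    have h6 := prodProc_ge M (lam i) B' (hlampos i).le hB' (hlamB i) (res ω n)
    refine le_trans ?_ h6
    apply Real.exp_le_exp.mpr
    have h7 : -(lam i * (M n (res ω n) - M 0 emptySit)) ≥ lam i * (ε i * n) := by
      have := mul_le_mul_of_nonneg_left hn (hlampos i).le
      nlinarith [this]
    have h8 : 2*(n:ℝ)*(lam i*B')^2 = (n:ℝ) * (lam i * ε i / 2) := by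
      have := hrate i
      nlinarith [this]
    rw [h8]
    nlinarith [h7]
  have hreach : ∀ j : ℕ, ∃ m : ℕ, (4:ℝ)^j ≤ T (i,j) m (res ω m) := by
    intro j
    have hexp : Tendsto (fun n : ℕ => Real.exp (lam i * ε i / 2 * n)) atTop atTop := by
      apply Real.tendsto_exp_atTop.comp
      have hc : 0 < lam i * ε i / 2 := by
        have := hlampos i
        have := hεpos i
        positivity
      exact (tendsto_natCast_atTop_atTop (R := ℝ)).const_mul_atTop hc
    obtain ⟨m, hm1, hm2⟩ :=
      (hgrow.and_eventually (hexp.eventually_ge_atTop ((4:ℝ)^j))).exists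
    refine ⟨m, ?_⟩
    have h9 : (4:ℝ)^j ≤ P i m (res ω m) := le_trans hm2 hm1
    rcases stopProc_reached (P i) ((4:ℝ)^j) m (res ω m) with h | h
    · exact h
    · rw [hTdef]
      simp only
      rw [h]
      exact h9
  rw [tendsto_atTop]
  intro C
  obtain ⟨j, hj⟩ : ∃ j : ℕ, C ≤ w (i,j) * (4:ℝ)^j := by
    obtain ⟨j, hj⟩ := pow_unbounded_of_one_lt (C * 2^(i+1) * 2) (by norm_num : (1:ℝ) < 2)
    refine ⟨j, ?_⟩
    have hwj : w (i,j) * (4:ℝ)^j = 2^j / (2^(i+1) * 2) := by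
      rw [hwdef]
      simp only
      rw [show (4:ℝ) = 2*2 by norm_num, mul_pow, inv_pow, inv_pow]
      field_simp
      ring
    rw [hwj, le_div_iff₀ (by positivity)]
    nlinarith [hj]
  obtain ⟨m, hm⟩ := hreach j
  have hpersist : ∀ n, m ≤ n → (4:ℝ)^j ≤ T (i,j) n (res ω n) := by
    intro n hn
    exact stopProc_persist (P i) ((4:ℝ)^j) ω m hm n hn
  filter_upwards [eventually_ge_atTop m] with n hn
  have hsummable : Summable (fun p => w p * T p n (res ω n)) :=
    Summable.of_nonneg_of_le (fun p => mul_nonneg (hwpos p) (hTpos p n (res ω n)))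
      (fun p => mul_le_mul_of_nonneg_left (hTle p n (res ω n)) (hwpos p))
      (hws.mul_right ((3/2:ℝ)^n))
  have hterm : w (i,j) * T (i,j) n (res ω n) ≤ ∑' p, w p * T p n (res ω n) :=
    Summable.le_tsum hsummable (i,j) (fun p _ => mul_nonneg (hwpos p) (hTpos p n (res ω n)))
  calc C ≤ w (i,j) * (4:ℝ)^j := hj
    _ ≤ w (i,j) * T (i,j) n (res ω n) :=
        mul_le_mul_of_nonneg_left (hpersist n hn) (hwpos (i,j))
    _ ≤ ∑' p, w p * T p n (res ω n) := hterm

end IP
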